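/- For every finite simple graph G without open twins and without closed twins, the FD-numbers of G and of its complement Ḡ differ by at most one (γ^FD(Ḡ) ≤ γ^FD(G) + 1 and γ^FD(G) ≤ γ^FD(Ḡ) + 1); moreover, if in addition neither G nor Ḡ has an isolated vertex, then the FTD-numbers of G and Ḡ differ by at most one (γ^FTD(Ḡ) ≤ γ^FTD(G) + 1 and γ^FTD(G) ≤ γ^FTD(Ḡ) + 1). -/

import Mathlib

open Finset

namespace SepDom

variable {V : Type*} [Fintype V] [DecidableEq V]

/-- The closed neighborhood `N[v]` of a vertex as a `Finset`. -/
def closedNbhd (G : SimpleGraph V) [DecidableRel G.Adj] (v : V) : Finset V :=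
  insert v (G.neighborFinset v)

/-- `C` is a dominating set: `N[v] ∩ C ≠ ∅` for all `v`. -/
def IsDomSet (G : SimpleGraph V) [DecidableRel G.Adj] (C : Finset V) : Prop :=
  ∀ v : V, (closedNbhd G v ∩ C).Nonempty

/-- `C` is a total-dominating set: `N(v) ∩ C ≠ ∅` for all `v`. -/
def IsTotalDomSet (G : SimpleGraph V) [DecidableRel G.Adj] (C : Finset V) : Prop :=
  ∀ v : V, (G.neighborFinset v ∩ C).Nonempty

/-- `C` is a locating set (L-set): the sets `N(v) ∩ C`, `v ∉ C`, are pairwise distinct. -/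
def IsLSet (G : SimpleGraph V) [DecidableRel G.Adj] (C : Finset V) : Prop :=
  ∀ u ∉ C, ∀ v ∉ C, G.neighborFinset u ∩ C = G.neighborFinset v ∩ C → u = v

/-- `C` is an open-separating set (O-set): the sets `N(v) ∩ C` are pairwise distinct. -/
def IsOSet (G : SimpleGraph V) [DecidableRel G.Adj] (C : Finset V) : Prop :=
  ∀ u v : V, G.neighborFinset u ∩ C = G.neighborFinset v ∩ C → u = v

/-- `C` is a closed-separating set (I-set): the sets `N[v] ∩ C` are pairwise distinct. -/
def IsISet (G : SimpleGraph V) [DecidableRel G.Adj] (C : Finset V) : Prop :=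
  ∀ u v : V, closedNbhd G u ∩ C = closedNbhd G v ∩ C → u = v

/-- `C` is a full-separating set (F-set): both open- and closed-separating. -/
def IsFSet (G : SimpleGraph V) [DecidableRel G.Adj] (C : Finset V) : Prop :=
  IsOSet G C ∧ IsISet G C

/-- `G` has open twins: distinct non-adjacent vertices with equal open neighborhoods. -/
def HasOpenTwins (G : SimpleGraph V) [DecidableRel G.Adj] : Prop :=
  ∃ u v : V, u ≠ v ∧ ¬ G.Adj u v ∧ G.neighborFinset u = G.neighborFinset v

/-- `G` has closed twins: distinct adjacent vertices with equal closed neighborhoods. -/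
def HasClosedTwins (G : SimpleGraph V) [DecidableRel G.Adj] : Prop :=
  ∃ u v : V, u ≠ v ∧ G.Adj u v ∧ closedNbhd G u = closedNbhd G v

/-- `G` has an isolated vertex: a vertex with empty open neighborhood. -/
def HasIsolated (G : SimpleGraph V) [DecidableRel G.Adj] : Prop :=
  ∃ v : V, G.neighborFinset v = ∅

/-- The L-number: minimum cardinality of an L-set. -/
noncomputable def lNum (G : SimpleGraph V) [DecidableRel G.Adj] : ℕ :=
  sInf {n | ∃ C : Finset V, IsLSet G C ∧ C.card = n}

/-- The O-number: minimum cardinality of an O-set. -/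
noncomputable def oNum (G : SimpleGraph V) [DecidableRel G.Adj] : ℕ :=
  sInf {n | ∃ C : Finset V, IsOSet G C ∧ C.card = n}

/-- The I-number: minimum cardinality of an I-set. -/
noncomputable def iNum (G : SimpleGraph V) [DecidableRel G.Adj] : ℕ :=
  sInf {n | ∃ C : Finset V, IsISet G C ∧ C.card = n}

/-- The F-number: minimum cardinality of an F-set. -/
noncomputable def fNum (G : SimpleGraph V) [DecidableRel G.Adj] : ℕ :=
  sInf {n | ∃ C : Finset V, IsFSet G C ∧ C.card = n}

/-- The LD-number: minimum cardinality of an LD-code. -/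
noncomputable def ldNum (G : SimpleGraph V) [DecidableRel G.Adj] : ℕ :=
  sInf {n | ∃ C : Finset V, IsDomSet G C ∧ IsLSet G C ∧ C.card = n}

/-- The OD-number: minimum cardinality of an OD-code. -/
noncomputable def odNum (G : SimpleGraph V) [DecidableRel G.Adj] : ℕ :=
  sInf {n | ∃ C : Finset V, IsDomSet G C ∧ IsOSet G C ∧ C.card = n}

/-- The ID-number: minimum cardinality of an ID-code. -/
noncomputable def idNum (G : SimpleGraph V) [DecidableRel G.Adj] : ℕ :=
  sInf {n | ∃ C : Finset V, IsDomSet G C ∧ IsISet G C ∧ C.card = n}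

/-- The FD-number: minimum cardinality of an FD-code. -/
noncomputable def fdNum (G : SimpleGraph V) [DecidableRel G.Adj] : ℕ :=
  sInf {n | ∃ C : Finset V, IsDomSet G C ∧ IsFSet G C ∧ C.card = n}

/-- The LTD-number: minimum cardinality of an LTD-code. -/
noncomputable def ltdNum (G : SimpleGraph V) [DecidableRel G.Adj] : ℕ :=
  sInf {n | ∃ C : Finset V, IsTotalDomSet G C ∧ IsLSet G C ∧ C.card = n}

/-- The OTD-number: minimum cardinality of an OTD-code. -/
noncomputable def otdNum (G : SimpleGraph V) [DecidableRel G.Adj] : ℕ :=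
  sInf {n | ∃ C : Finset V, IsTotalDomSet G C ∧ IsOSet G C ∧ C.card = n}

/-- The ITD-number: minimum cardinality of an ITD-code. -/
noncomputable def itdNum (G : SimpleGraph V) [DecidableRel G.Adj] : ℕ :=
  sInf {n | ∃ C : Finset V, IsTotalDomSet G C ∧ IsISet G C ∧ C.card = n}

/-- The FTD-number: minimum cardinality of an FTD-code. -/
noncomputable def ftdNum (G : SimpleGraph V) [DecidableRel G.Adj] : ℕ :=
  sInf {n | ∃ C : Finset V, IsTotalDomSet G C ∧ IsFSet G C ∧ C.card = n}

end SepDom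

open SepDom

section Aux

variable {V : Type*} [Fintype V] [DecidableEq V]

lemma nf_inter_compl (G : SimpleGraph V) [DecidableRel G.Adj] (v : V) (C : Finset V) :
    Gᶜ.neighborFinset v ∩ C = C \ closedNbhd G v := by
  ext a
  simp only [mem_inter, SimpleGraph.mem_neighborFinset, SimpleGraph.compl_adj, mem_sdiff,
    closedNbhd, mem_insert]
  constructor
  · rintro ⟨⟨hne, hna⟩, hC⟩
    refine ⟨hC, ?_⟩
    rintro (rfl | h)
    · exact hne rfl
    · exact hna h
  · rintro ⟨hC, h⟩
    push_neg at h
    exact ⟨⟨fun hva => h.1 hva.symm, h.2⟩, hC⟩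

lemma cnf_inter_compl (G : SimpleGraph V) [DecidableRel G.Adj] (v : V) (C : Finset V) :
    closedNbhd Gᶜ v ∩ C = C \ G.neighborFinset v := by
  ext a
  simp only [closedNbhd, mem_inter, mem_insert, SimpleGraph.mem_neighborFinset,
    SimpleGraph.compl_adj, mem_sdiff]
  constructor
  · rintro ⟨h, hC⟩
    refine ⟨hC, ?_⟩
    rcases h with rfl | ⟨_, h⟩
    · exact fun h' => G.irrefl h'
    · exact h
  · rintro ⟨hC, h⟩
    by_cases hav : a = v
    · exact ⟨Or.inl hav, hC⟩
    · exact ⟨Or.inr ⟨fun h' => hav h'.symm, h⟩, hC⟩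

lemma isFSet_compl {G : SimpleGraph V} [DecidableRel G.Adj] {C : Finset V}
    (h : IsFSet G C) : IsFSet Gᶜ C := by
  obtain ⟨hO, hI⟩ := h
  constructor
  · intro u v huv
    rw [nf_inter_compl, nf_inter_compl] at huv
    apply hI
    have h2 := congrArg (C \ ·) huv
    simp only [Finset.sdiff_sdiff_self_left] at h2
    rw [inter_comm C, inter_comm C] at h2
    exact h2
  · intro u v huv
    rw [cnf_inter_compl, cnf_inter_compl] at huv
    apply hO
    have h2 := congrArg (C \ ·) huv
    simp only [Finset.sdiff_sdiff_self_left] at h2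
    rw [inter_comm C, inter_comm C] at h2
    exact h2

lemma isFSet_mono {G : SimpleGraph V} [DecidableRel G.Adj] {C C' : Finset V}
    (h : IsFSet G C) (hCC : C ⊆ C') : IsFSet G C' := by
  obtain ⟨hO, hI⟩ := h
  have key : ∀ s t : Finset V, s ∩ C' = t ∩ C' → s ∩ C = t ∩ C := by
    intro s t hst
    have h2 := congrArg (· ∩ C) hst
    simp only [inter_assoc, Finset.inter_eq_right.mpr hCC] at h2
    exact h2
  exact ⟨fun u v huv => hO u v (key _ _ huv), fun u v huv => hI u v (key _ _ huv)⟩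

lemma isFSet_univ {G : SimpleGraph V} [DecidableRel G.Adj]
    (hOT : ¬ HasOpenTwins G) (hCT : ¬ HasClosedTwins G) : IsFSet G Finset.univ := by
  constructor
  · intro u v h
    rw [inter_univ, inter_univ] at h
    by_contra hne
    by_cases hadj : G.Adj u v
    · have hu : u ∈ G.neighborFinset v := (SimpleGraph.mem_neighborFinset G v u).mpr hadj.symm
      rw [← h] at hu
      exact G.irrefl ((SimpleGraph.mem_neighborFinset G u u).mp hu)
    · exact hOT ⟨u, v, hne, hadj, h⟩
  · intro u v h
    rw [inter_univ, inter_univ] at h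
    by_contra hne
    by_cases hadj : G.Adj u v
    · exact hCT ⟨u, v, hne, hadj, h⟩
    · have hv : v ∈ closedNbhd G v := mem_insert_self _ _
      rw [← h] at hv
      simp only [closedNbhd, mem_insert, SimpleGraph.mem_neighborFinset] at hv
      rcases hv with rfl | h'
      · exact hne rfl
      · exact hadj h'

lemma fdNum_congr {G G' : SimpleGraph V} [iG : DecidableRel G.Adj] [iG' : DecidableRel G'.Adj]
    (h : G = G') : fdNum G = fdNum G' := by
  subst h
  exact congrArg (fun i : DecidableRel G.Adj => @fdNum V _ _ G i) (Subsingleton.elim iG iG')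

lemma ftdNum_congr {G G' : SimpleGraph V} [iG : DecidableRel G.Adj] [iG' : DecidableRel G'.Adj]
    (h : G = G') : ftdNum G = ftdNum G' := by
  subst h
  exact congrArg (fun i : DecidableRel G.Adj => @ftdNum V _ _ G i) (Subsingleton.elim iG iG')

lemma neighborFinset_congr {G G' : SimpleGraph V} [DecidableRel G.Adj] [DecidableRel G'.Adj]
    (h : G = G') (v : V) : G.neighborFinset v = G'.neighborFinset v := by
  ext a
  simp [SimpleGraph.mem_neighborFinset, h]

lemma hasIsolated_congr {G G' : SimpleGraph V} [DecidableRel G.Adj] [DecidableRel G'.Adj]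
    (h : G = G') : HasIsolated G ↔ HasIsolated G' :=
  ⟨fun ⟨v, hv⟩ => ⟨v, (neighborFinset_congr h v).symm.trans hv⟩,
   fun ⟨v, hv⟩ => ⟨v, (neighborFinset_congr h v).trans hv⟩⟩

lemma fd_key (G : SimpleGraph V) [DecidableRel G.Adj]
    (hF : IsFSet G Finset.univ) : fdNum Gᶜ ≤ fdNum G + 1 := by
  have hmem : fdNum G ∈ {n | ∃ C : Finset V, IsDomSet G C ∧ IsFSet G C ∧ C.card = n} := by
    apply Nat.sInf_mem
    exact ⟨Finset.univ.card, Finset.univ,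
      fun v => ⟨v, by simp [closedNbhd]⟩, hF, rfl⟩
  obtain ⟨C, hD, hFs, hc⟩ := hmem
  have hFc : IsFSet Gᶜ C := isFSet_compl hFs
  by_cases hdom : IsDomSet Gᶜ C
  · have h1 : fdNum Gᶜ ≤ C.card := Nat.sInf_le ⟨C, hdom, hFc, rfl⟩
    omega
  · simp only [IsDomSet, not_forall] at hdom
    obtain ⟨w, hw⟩ := hdom
    rw [not_nonempty_iff_eq_empty] at hw
    have hdom' : IsDomSet Gᶜ (insert w C) := by
      intro u
      by_cases hu : (closedNbhd Gᶜ u ∩ C).Nonempty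
      · obtain ⟨x, hx⟩ := hu
        exact ⟨x, mem_inter.mpr ⟨(mem_inter.mp hx).1, mem_insert_of_mem (mem_inter.mp hx).2⟩⟩
      · rw [not_nonempty_iff_eq_empty] at hu
        have key : ∀ z : V, closedNbhd Gᶜ z ∩ C = ∅ → closedNbhd G z ∩ C = C := by
          intro z hz
          rw [cnf_inter_compl, sdiff_eq_empty_iff_subset] at hz
          exact Finset.inter_eq_right.mpr (hz.trans (Finset.subset_insert _ _))
        have huw : u = w := hFs.2 u w ((key u hu).trans (key w hw).symm)
        subst huw
        exact ⟨u, mem_inter.mpr ⟨mem_insert_self _ _, mem_insert_self _ _⟩⟩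
    have h1 : fdNum Gᶜ ≤ (insert w C).card :=
      Nat.sInf_le ⟨insert w C, hdom', isFSet_mono hFc (Finset.subset_insert _ _), rfl⟩
    have h2 := Finset.card_insert_le w C
    omega

lemma ftd_key (G : SimpleGraph V) [DecidableRel G.Adj]
    (hF : IsFSet G Finset.univ) (hiG : ¬ HasIsolated G) (hiGc : ¬ HasIsolated Gᶜ) :
    ftdNum Gᶜ ≤ ftdNum G + 1 := by
  have hiG' : ∀ v : V, G.neighborFinset v ≠ ∅ := fun v hv => hiG ⟨v, hv⟩
  have hiGc' : ∀ v : V, Gᶜ.neighborFinset v ≠ ∅ := fun v hv => hiGc ⟨v, hv⟩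
  have hmem : ftdNum G ∈ {n | ∃ C : Finset V, IsTotalDomSet G C ∧ IsFSet G C ∧ C.card = n} := by
    apply Nat.sInf_mem
    refine ⟨Finset.univ.card, Finset.univ, fun v => ?_, hF, rfl⟩
    rw [inter_univ]
    exact Finset.nonempty_iff_ne_empty.mpr (hiG' v)
  obtain ⟨C, hD, hFs, hc⟩ := hmem
  have hFc : IsFSet Gᶜ C := isFSet_compl hFs
  by_cases hdom : IsTotalDomSet Gᶜ C
  · have h1 : ftdNum Gᶜ ≤ C.card := Nat.sInf_le ⟨C, hdom, hFc, rfl⟩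
    omega
  · simp only [IsTotalDomSet, not_forall] at hdom
    obtain ⟨w, hw⟩ := hdom
    rw [not_nonempty_iff_eq_empty] at hw
    obtain ⟨x, hx⟩ := Finset.nonempty_iff_ne_empty.mpr (hiGc' w)
    have hdom' : IsTotalDomSet Gᶜ (insert x C) := by
      intro u
      by_cases hu : (Gᶜ.neighborFinset u ∩ C).Nonempty
      · obtain ⟨y, hy⟩ := hu
        exact ⟨y, mem_inter.mpr ⟨(mem_inter.mp hy).1, mem_insert_of_mem (mem_inter.mp hy).2⟩⟩
      · rw [not_nonempty_iff_eq_empty] at hu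
        have key : ∀ z : V, Gᶜ.neighborFinset z ∩ C = ∅ → closedNbhd G z ∩ C = C := by
          intro z hz
          rw [nf_inter_compl, sdiff_eq_empty_iff_subset] at hz
          exact Finset.inter_eq_right.mpr hz
        have huw : u = w := hFs.2 u w ((key u hu).trans (key w hw).symm)
        subst huw
        exact ⟨x, mem_inter.mpr ⟨hx, mem_insert_self _ _⟩⟩
    have h1 : ftdNum Gᶜ ≤ (insert x C).card :=
      Nat.sInf_le ⟨insert x C, hdom', isFSet_mono hFc (Finset.subset_insert _ _), rfl⟩
    have h2 := Finset.card_insert_le x C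
    omega

end Aux


theorem fd_ftd_compl_diff_le_one {V : Type*} [Fintype V] [DecidableEq V]
    (G : SimpleGraph V) [DecidableRel G.Adj]
    (hOT : ¬ HasOpenTwins G) (hCT : ¬ HasClosedTwins G) :
    (fdNum Gᶜ ≤ fdNum G + 1 ∧ fdNum G ≤ fdNum Gᶜ + 1) ∧
      ((¬ HasIsolated G ∧ ¬ HasIsolated Gᶜ) →
        (ftdNum Gᶜ ≤ ftdNum G + 1 ∧ ftdNum G ≤ ftdNum Gᶜ + 1)) := by
  have hF : IsFSet G Finset.univ := isFSet_univ hOT hCT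
  have hFc : IsFSet Gᶜ Finset.univ := isFSet_compl hF
  have h1 := fd_key G hF
  have h2 := fd_key Gᶜ hFc
  rw [fdNum_congr (compl_compl G)] at h2
  refine ⟨⟨h1, h2⟩, fun ⟨hiG, hiGc⟩ => ?_⟩
  have h3 := ftd_key G hF hiG hiGc
  have hiGcc : ¬ HasIsolated Gᶜᶜ := fun hI => hiG ((hasIsolated_congr (compl_compl G)).mp hI)
  have h4 := ftd_key Gᶜ hFc hiGc hiGcc
  rw [ftdNum_congr (compl_compl G)] at h4
  exact ⟨h3, h4⟩
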